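/- arXiv:0712.1622 — 3 statements merged into one kernel-verified Lean document; each statement's English description precedes it below -/
import Mathlib

section
/- If G ≤ Sym(X) acts arc-transitively on the Johnson graph J(n,2) (with |X| = n ≥ 4), then G is 3-transitive on X. -/
/-- If `G ≤ Sym(X)` acts arc-transitively on the Johnson graph `J(n,2)`
(with `|X| = n ≥ 4`), then `G` is `3`-transitive on `X`. -/
theorem three_transitive_of_johnson2_arc_transitive (n : ℕ) (hn : 4 ≤ n)
    (G : Subgroup (Equiv.Perm (Fin n)))
    (harc : ∀ A B A' B' : Finset (Fin n),
      A.card = 2 → B.card = 2 → A ≠ B → (A ∩ B).card = 1 →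
      A'.card = 2 → B'.card = 2 → A' ≠ B' → (A' ∩ B').card = 1 →
      ∃ g ∈ G, A.image ⇑g = A' ∧ B.image ⇑g = B') :
    ∀ u v : Fin 3 → Fin n, Function.Injective u → Function.Injective v →
      ∃ g ∈ G, ∀ i, g (u i) = v i := by
  intro u v hu hv
  have hu01 : u 0 ≠ u 1 := fun h => by simpa using hu h
  have hu02 : u 0 ≠ u 2 := fun h => by simpa using hu h
  have hu12 : u 1 ≠ u 2 := fun h => by simpa using hu h
  have hv01 : v 0 ≠ v 1 := fun h => by simpa using hv h
  have hv02 : v 0 ≠ v 2 := fun h => by simpa using hv h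
  have hv12 : v 1 ≠ v 2 := fun h => by simpa using hv h
  have key : ∀ a b c : Fin n, a ≠ b → a ≠ c → b ≠ c →
      (({a, b} : Finset (Fin n)) ∩ {b, c}) = {b} := by
    intro a b c hab hac hbc
    ext x
    simp only [Finset.mem_inter, Finset.mem_insert, Finset.mem_singleton]
    constructor
    · rintro ⟨h1 | h1, h2 | h2⟩ <;> subst h1 <;> tauto
    · rintro rfl; tauto
  obtain ⟨g, hg, hA, hB⟩ := harc {u 0, u 1} {u 1, u 2} {v 0, v 1} {v 1, v 2}
    (Finset.card_pair hu01) (Finset.card_pair hu12)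
    (by
      intro h
      have : u 0 ∈ ({u 1, u 2} : Finset (Fin n)) := h ▸ (by simp)
      simp only [Finset.mem_insert, Finset.mem_singleton] at this
      tauto)
    (by rw [key _ _ _ hu01 hu02 hu12]; simp)
    (Finset.card_pair hv01) (Finset.card_pair hv12)
    (by
      intro h
      have : v 0 ∈ ({v 1, v 2} : Finset (Fin n)) := h ▸ (by simp)
      simp only [Finset.mem_insert, Finset.mem_singleton] at this
      tauto)
    (by rw [key _ _ _ hv01 hv02 hv12]; simp)
  have hgu1A : g (u 1) ∈ ({v 0, v 1} : Finset (Fin n)) := by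
    rw [← hA]; exact Finset.mem_image_of_mem _ (by simp)
  have hgu1B : g (u 1) ∈ ({v 1, v 2} : Finset (Fin n)) := by
    rw [← hB]; exact Finset.mem_image_of_mem _ (by simp)
  simp only [Finset.mem_insert, Finset.mem_singleton] at hgu1A hgu1B
  have h1 : g (u 1) = v 1 := by
    rcases hgu1A with h | h
    · rcases hgu1B with h' | h' <;> rw [h] at h' <;> tauto
    · exact h
  have hgu0 : g (u 0) ∈ ({v 0, v 1} : Finset (Fin n)) := by
    rw [← hA]; exact Finset.mem_image_of_mem _ (by simp)
  have hgu2 : g (u 2) ∈ ({v 1, v 2} : Finset (Fin n)) := by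
    rw [← hB]; exact Finset.mem_image_of_mem _ (by simp)
  simp only [Finset.mem_insert, Finset.mem_singleton] at hgu0 hgu2
  have h0 : g (u 0) = v 0 := by
    rcases hgu0 with h | h
    · exact h
    · exact absurd (g.injective (h.trans h1.symm)) hu01
  have h2 : g (u 2) = v 2 := by
    rcases hgu2 with h | h
    · exact absurd (g.injective (h1.trans h.symm)) hu12
    · exact h
  refine ⟨g, hg, fun i => ?_⟩
  fin_cases i <;> assumption
end

section
/- Let q be a prime power with q ≡ 1 (mod 4). Then PSL(2,q), acting on unordered pairs of points of the projective line PG(1,q), has exactly two orbits on edges of the Johnson graph J(q+1,2) (pairs of 2-subsets meeting in one point), and these two orbits have equal size q(q²−1)/4. -/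
open Matrix

/-- The projective line over a field `F`. -/
abbrev ProjLine (F : Type*) [Field F] := Projectivization F (Fin 2 → F)

/-- The action of `SL(2,F)` on the projective line. -/
noncomputable def sl2Map {F : Type*} [Field F] (g : SpecialLinearGroup (Fin 2) F) :
    ProjLine F → ProjLine F :=
  Projectivization.map
    ((Matrix.GeneralLinearGroup.toLin (SpecialLinearGroup.toGL g)).toLinearEquiv.toLinearMap)
    ((Matrix.GeneralLinearGroup.toLin (SpecialLinearGroup.toGL g)).toLinearEquiv.injective)

namespace PSLJ
variable {F : Type} [Field F]

/-- determinant of the 2x2 matrix with columns u, v -/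
def dd (u v : Fin 2 → F) : F := u 0 * v 1 - u 1 * v 0

lemma dd_smul_smul (a b : F) (u v : Fin 2 → F) : dd (a • u) (b • v) = a * b * dd u v := by
  simp [dd]; ring

lemma dd_smul_left (a : F) (u v : Fin 2 → F) : dd (a • u) v = a * dd u v := by
  simp [dd]; ring

lemma dd_self (u : Fin 2 → F) : dd u u = 0 := by simp [dd]; ring

lemma dd_comm (u v : Fin 2 → F) : dd u v = - dd v u := by simp [dd]; ring

lemma dd_add_right (u v : Fin 2 → F) : dd u (u + v) = dd u v := by simp [dd]; ring

lemma dd_add_left (u v : Fin 2 → F) : dd (u + v) v = dd u v := by simp [dd]; ring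

lemma dd_left_ne {u v : Fin 2 → F} (h : dd u v ≠ 0) : u ≠ 0 := by
  rintro rfl; exact h (by simp [dd])

lemma dd_right_ne {u v : Fin 2 → F} (h : dd u v ≠ 0) : v ≠ 0 := by
  rintro rfl; exact h (by simp [dd])

lemma dd_sum_ne {u v : Fin 2 → F} (h : dd u v ≠ 0) : u + v ≠ 0 := by
  intro h0
  have hv : v = -u := by
    funext i
    have := congrFun h0 i
    simp only [Pi.add_apply, Pi.zero_apply] at this
    simp only [Pi.neg_apply]
    linear_combination this
  apply h
  rw [hv]
  simp [dd]; ring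

lemma one_ne_zero_vec : (1 : Fin 2 → F) ≠ 0 := fun h => one_ne_zero (congrFun h 0)

open Classical in
noncomputable def pt (u : Fin 2 → F) : ProjLine F :=
  if h : u ≠ 0 then Projectivization.mk F u h else Projectivization.mk F 1 one_ne_zero_vec

lemma pt_eq_mk {u : Fin 2 → F} (h : u ≠ 0) : pt u = Projectivization.mk F u h := by
  simp [pt, h]

lemma vec_cases {u : Fin 2 → F} (h : u ≠ 0) : u 0 ≠ 0 ∨ u 1 ≠ 0 := by
  by_contra hc
  push_neg at hc
  exact h (funext fun i => by fin_cases i <;> simp [hc.1, hc.2])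

lemma pt_eq_pt_iff {u v : Fin 2 → F} (hu : u ≠ 0) (hv : v ≠ 0) :
    pt u = pt v ↔ dd u v = 0 := by
  rw [pt_eq_mk hu, pt_eq_mk hv, Projectivization.mk_eq_mk_iff]
  constructor
  · rintro ⟨a, ha⟩
    rw [← ha, Units.smul_def, dd_smul_left, dd_self, mul_zero]
  · intro hdd
    have hdd' : u 0 * v 1 = u 1 * v 0 := by
      have := hdd; unfold dd at this; linear_combination this
    rcases vec_cases hv with h0 | h1
    · have hu0 : u 0 ≠ 0 := by
        intro h
        have h1 : u 1 = 0 := by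
          rcases mul_eq_zero.mp (show u 1 * v 0 = 0 by linear_combination -hdd' + v 1 * h) with h' | h'
          · exact h'
          · exact absurd h' h0
        exact hu (funext fun i => by fin_cases i <;> simp [h, h1])
      refine ⟨Units.mk0 (u 0 * (v 0)⁻¹) (by simp [hu0, h0]), funext fun i => ?_⟩
      fin_cases i <;> simp only [Units.smul_def, Units.val_mk0, Pi.smul_apply, smul_eq_mul, Fin.zero_eta, Fin.mk_one]
      · field_simp
      · field_simp
        linear_combination hdd'
    · have hu1 : u 1 ≠ 0 := by
        intro h
        have h0 : u 0 = 0 := by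
          rcases mul_eq_zero.mp (show u 0 * v 1 = 0 by linear_combination hdd' + v 0 * h) with h' | h'
          · exact h'
          · exact absurd h' h1
        exact hu (funext fun i => by fin_cases i <;> simp [h, h0])
      refine ⟨Units.mk0 (u 1 * (v 1)⁻¹) (by simp [hu1, h1]), funext fun i => ?_⟩
      fin_cases i <;> simp only [Units.smul_def, Units.val_mk0, Pi.smul_apply, smul_eq_mul, Fin.zero_eta, Fin.mk_one]
      · field_simp
        linear_combination -hdd'
      · field_simp

lemma pt_eq_elim {u v : Fin 2 → F} (hu : u ≠ 0) (hv : v ≠ 0) (h : pt u = pt v) :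
    ∃ t : F, t ≠ 0 ∧ u = t • v := by
  rw [pt_eq_mk hu, pt_eq_mk hv, Projectivization.mk_eq_mk_iff] at h
  rcases h with ⟨a, ha⟩
  exact ⟨a, a.ne_zero, by rw [← ha, Units.smul_def]⟩

lemma pt_smul {u : Fin 2 → F} (hu : u ≠ 0) {t : F} (ht : t ≠ 0) : pt (t • u) = pt u := by
  rw [pt_eq_pt_iff (smul_ne_zero ht hu) hu, dd_smul_left, dd_self, mul_zero]

lemma pair_eq {X : Type*} [DecidableEq X] {a b c d : X}
    (h : ({a, b} : Finset X) = {c, d}) : a = c ∧ b = d ∨ a = d ∧ b = c := by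
  have ha : a = c ∨ a = d := by
    have : a ∈ ({c, d} : Finset X) := h ▸ by simp
    simpa using this
  have hb : b = c ∨ b = d := by
    have : b ∈ ({c, d} : Finset X) := h ▸ by simp
    simpa using this
  have hd : d = a ∨ d = b := by
    have : d ∈ ({a, b} : Finset X) := h ▸ by simp
    simpa using this
  have hc : c = a ∨ c = b := by
    have : c ∈ ({a, b} : Finset X) := h ▸ by simp
    simpa using this
  tauto

section EE
variable [DecidableEq (ProjLine F)]

noncomputable def EE (u v : Fin 2 → F) : Sym2 (Finset (ProjLine F)) :=
  s(({pt u, pt v} : Finset (ProjLine F)), ({pt u, pt (u + v)} : Finset (ProjLine F)))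

lemma EE_smul {u v : Fin 2 → F} (hd : dd u v ≠ 0) {t : F} (ht : t ≠ 0) :
    EE (t • u) (t • v) = EE u v := by
  have hu := dd_left_ne hd
  have hv := dd_right_ne hd
  have huv := dd_sum_ne hd
  unfold EE
  rw [pt_smul hu ht, pt_smul hv ht, show t • u + t • v = t • (u + v) by rw [smul_add],
    pt_smul huv ht]

lemma EE_swap {u v : Fin 2 → F} (hd : dd u v ≠ 0) {t : F} (ht : t ≠ 0) :
    EE (t • u) (-(t • (u + v))) = EE u v := by
  have hu := dd_left_ne hd
  have hv := dd_right_ne hd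
  have huv := dd_sum_ne hd
  unfold EE
  have h3 : t • u + -(t • (u + v)) = (-t) • v := by
    module
  rw [h3, show -(t • (u+v)) = (-t) • (u+v) by rw [neg_smul],
    pt_smul hu ht, pt_smul huv (neg_ne_zero.mpr ht), pt_smul hv (neg_ne_zero.mpr ht)]
  exact Sym2.eq_swap

end EE

lemma dd_right_sum (u v : Fin 2 → F) : dd v (u + v) = -(dd u v) := by
  unfold dd; simp; ring

section Main
variable [DecidableEq (ProjLine F)]

lemma main_rel {u v u' v' : Fin 2 → F} (hd : dd u v ≠ 0) (hd' : dd u' v' ≠ 0)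
    (h : EE u v = EE u' v') :
    ∃ t : F, t ≠ 0 ∧
      ((u' = t • u ∧ v' = t • v ∧ dd u' v' = t ^ 2 * dd u v) ∨
       (u' = t • u ∧ v' = -(t • (u + v)) ∧ dd u' v' = -(t ^ 2 * dd u v))) := by
  have hu := dd_left_ne hd
  have hv := dd_right_ne hd
  have huv := dd_sum_ne hd
  have hu' := dd_left_ne hd'
  have hv' := dd_right_ne hd'
  have huv' := dd_sum_ne hd'
  have ne_u'v' : pt u' ≠ pt v' := fun e => hd' ((pt_eq_pt_iff hu' hv').1 e)
  have ne_u'w' : pt u' ≠ pt (u' + v') := fun e => by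
    rw [pt_eq_pt_iff hu' huv', dd_add_right] at e; exact hd' e
  have ne_v'w' : pt v' ≠ pt (u' + v') := fun e => by
    rw [pt_eq_pt_iff hv' huv', dd_right_sum] at e
    exact hd' (neg_eq_zero.mp e)
  unfold EE at h
  rcases Sym2.eq_iff.mp h with ⟨hA, hB⟩ | ⟨hA, hB⟩
  · rcases pair_eq hA with ⟨p1, p2⟩ | ⟨p1, p2⟩
    · rcases pair_eq hB with ⟨q1, q2⟩ | ⟨q1, q2⟩
      · -- main case I(a)
        obtain ⟨a, ha, h1⟩ := pt_eq_elim hu hu' p1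
        obtain ⟨b, hb, h2⟩ := pt_eq_elim hv hv' p2
        obtain ⟨g, hg, h3⟩ := pt_eq_elim huv huv' q2
        have e1 : dd u v = a * b * dd u' v' := by rw [h1, h2, dd_smul_smul]
        have e2 : dd u v = a * g * dd u' v' := by
          rw [← dd_add_right u v, h3, h1, dd_smul_smul, dd_add_right]
        have e3 : dd u v = g * b * dd u' v' := by
          rw [← dd_add_left u v, h3, h2, dd_smul_smul, dd_add_left]
        have hbg : b = g := by
          have := mul_right_cancel₀ hd' (e1.symm.trans e2)
          exact mul_left_cancel₀ ha this
        have hag : a = g := by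
          have := mul_right_cancel₀ hd' (e1.symm.trans e3)
          exact mul_left_cancel₀ hb (by linear_combination this)
        refine ⟨a⁻¹, inv_ne_zero ha, Or.inl ⟨?_, ?_, ?_⟩⟩
        · rw [h1, smul_smul, inv_mul_cancel₀ ha, one_smul]
        · rw [h2, smul_smul, hbg, ← hag, inv_mul_cancel₀ ha, one_smul]
        · have e : dd u v = a * a * dd u' v' := by
            rw [e1, hbg, ← hag]
          field_simp
          linear_combination -e
      · exact absurd (p1.symm.trans q1) ne_u'w'
    · rcases pair_eq hB with ⟨q1, q2⟩ | ⟨q1, q2⟩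
      · exact absurd (q1.symm.trans p1) ne_u'v'
      · exact absurd (p1.symm.trans q1) ne_v'w'
  · rcases pair_eq hA with ⟨p1, p2⟩ | ⟨p1, p2⟩
    · rcases pair_eq hB with ⟨q1, q2⟩ | ⟨q1, q2⟩
      · -- main case II(a)
        obtain ⟨a, ha, h1⟩ := pt_eq_elim hu hu' p1
        obtain ⟨b, hb, h2⟩ := pt_eq_elim hv huv' p2
        obtain ⟨g, hg, h3⟩ := pt_eq_elim huv hv' q2
        have e1 : dd u v = a * b * dd u' v' := by
          rw [h1, h2, dd_smul_smul, dd_add_right]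
        have e2 : dd u v = a * g * dd u' v' := by
          rw [← dd_add_right u v, h3, h1, dd_smul_smul]
        have e3 : b * g * dd u' v' = -(dd u v) := by
          have e := dd_right_sum u v
          calc b * g * dd u' v' = dd (b • (u' + v')) (g • v') := by
                rw [dd_smul_smul, dd_add_left]
            _ = dd v (u + v) := by rw [← h2, ← h3]
            _ = -(dd u v) := e
        have hbg : b = g := by
          have := mul_right_cancel₀ hd' (e1.symm.trans e2)
          exact mul_left_cancel₀ ha this
        have hab : a = -b := by
          have h0 : (a + b) * (g * dd u' v') = 0 := by linear_combination e3 - e2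
          rcases mul_eq_zero.mp h0 with h' | h'
          · linear_combination h'
          · exact absurd h' (mul_ne_zero hg hd')
        refine ⟨a⁻¹, inv_ne_zero ha, Or.inr ⟨?_, ?_, ?_⟩⟩
        · rw [h1, smul_smul, inv_mul_cancel₀ ha, one_smul]
        · have hga : g = -a := by rw [← hbg]; linear_combination hab
          rw [h3, hga, smul_smul, show a⁻¹ * -a = -1 from by field_simp]
          simp
        · have e := e3
          rw [← hbg] at e
          have e' : a * a * dd u' v' = -(dd u v) := by rw [show a * a = b * b from by rw [hab]; ring]; exact e
          field_simp
          linear_combination e'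
      · exact absurd (p1.symm.trans q1) ne_u'v'
    · rcases pair_eq hB with ⟨q1, q2⟩ | ⟨q1, q2⟩
      · exact absurd (q1.symm.trans p1) ne_u'w'
      · exact absurd (q1.symm.trans p1) ne_v'w'

end Main

lemma isSquare_sq_mul {s d : F} (hs : s ≠ 0) : IsSquare (s ^ 2 * d) ↔ IsSquare d := by
  constructor
  · rintro ⟨y, hy⟩
    exact ⟨y / s, by field_simp at hy ⊢; linear_combination hy⟩
  · rintro ⟨y, hy⟩
    exact ⟨s * y, by rw [hy]; ring⟩

lemma sl2_mulVec_ne_zero (g : SpecialLinearGroup (Fin 2) F) {u : Fin 2 → F} (hu : u ≠ 0) :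
    g.val.mulVec u ≠ 0 := by
  intro h0
  apply hu
  have : (g⁻¹).val.mulVec (g.val.mulVec u) = 0 := by rw [h0, Matrix.mulVec_zero]
  rwa [Matrix.mulVec_mulVec, ← Matrix.SpecialLinearGroup.coe_mul, inv_mul_cancel,
    Matrix.SpecialLinearGroup.coe_one, Matrix.one_mulVec] at this

lemma dd_mulVec (M : Matrix (Fin 2) (Fin 2) F) (u v : Fin 2 → F) :
    dd (M.mulVec u) (M.mulVec v) = M.det * dd u v := by
  simp [dd, Matrix.mulVec, dotProduct, Fin.sum_univ_two, Matrix.det_fin_two]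
  ring

lemma sl2Map_pt (g : SpecialLinearGroup (Fin 2) F) {u : Fin 2 → F} (hu : u ≠ 0) :
    sl2Map g (pt u) = pt (g.val.mulVec u) := by
  rw [pt_eq_mk hu, pt_eq_mk (sl2_mulVec_ne_zero g hu)]
  unfold sl2Map
  rw [Projectivization.map_mk]
  rfl

section Map
variable [DecidableEq (ProjLine F)]

lemma map_EE (g : SpecialLinearGroup (Fin 2) F) {u v : Fin 2 → F} (hd : dd u v ≠ 0) :
    (EE u v).map (fun A => A.image (sl2Map g)) = EE (g.val.mulVec u) (g.val.mulVec v) := by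
  have hu := dd_left_ne hd
  have hv := dd_right_ne hd
  have huv := dd_sum_ne hd
  unfold EE
  rw [Sym2.map_pair_eq, Finset.image_insert, Finset.image_singleton,
    Finset.image_insert, Finset.image_singleton, sl2Map_pt g hu, sl2Map_pt g hv,
    sl2Map_pt g huv, Matrix.mulVec_add]

omit [DecidableEq (ProjLine F)] in
lemma dd_mulVec_sl2 (g : SpecialLinearGroup (Fin 2) F) (u v : Fin 2 → F) :
    dd (g.val.mulVec u) (g.val.mulVec v) = dd u v := by
  rw [dd_mulVec, g.prop, one_mul]

lemma exists_sl2 {u v u' v' : Fin 2 → F} (hd : dd u v ≠ 0) (h' : dd u' v' = dd u v) :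
    ∃ g : SpecialLinearGroup (Fin 2) F, g.val.mulVec u = u' ∧ g.val.mulVec v = v' := by
  set D := dd u v with hD
  have hMd : (!![u' 0, v' 0; u' 1, v' 1] * !![v 1, -(v 0); -(u 1), u 0]).det = D * D := by
    rw [Matrix.det_mul, Matrix.det_fin_two_of, Matrix.det_fin_two_of]
    unfold dd at h' hD
    linear_combination (v 1 * u 0 - v 0 * u 1) * h' - D * hD
  refine ⟨⟨(D⁻¹ : F) • (!![u' 0, v' 0; u' 1, v' 1] * !![v 1, -(v 0); -(u 1), u 0]), ?_⟩, ?_, ?_⟩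
  · rw [Matrix.det_smul, hMd]
    simp [Fintype.card_fin]
    field_simp
  · funext i
    fin_cases i <;>
      simp [Matrix.mulVec, dotProduct, Fin.sum_univ_two, Matrix.mul_apply,
        Matrix.smul_apply] <;>
      field_simp <;> unfold D <;> unfold dd <;> ring
  · funext i
    fin_cases i <;>
      simp [Matrix.mulVec, dotProduct, Fin.sum_univ_two, Matrix.mul_apply,
        Matrix.smul_apply] <;>
      field_simp <;> unfold D <;> unfold dd <;> ring

end Map

section Count
variable [Fintype F] [DecidableEq F]

lemma card_fiber {u : Fin 2 → F} (hu : u ≠ 0) (d₀ : F) :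
    (Finset.univ.filter fun v : Fin 2 → F => dd u v = d₀).card = Fintype.card F := by
  rcases vec_cases hu with h0 | h1
  · have himg : (Finset.univ.filter fun v : Fin 2 → F => dd u v = d₀) =
        Finset.univ.image (fun t : F => ![t, (d₀ + u 1 * t) / u 0]) := by
      ext v
      simp only [Finset.mem_filter, Finset.mem_univ, true_and, Finset.mem_image]
      constructor
      · intro hv
        refine ⟨v 0, ?_⟩
        funext i; fin_cases i
        · simp
        · simp only [Fin.mk_one, Matrix.cons_val_one, Matrix.cons_val_zero, Matrix.head_cons]
          field_simp
          unfold dd at hv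
          linear_combination -hv
      · rintro ⟨t, rfl⟩
        unfold dd
        simp only [Matrix.cons_val_zero, Matrix.cons_val_one, Matrix.head_cons]
        field_simp
        ring
    rw [himg, Finset.card_image_of_injective _ (fun s t hst => by
      simpa using congrFun hst 0), Finset.card_univ]
  · have himg : (Finset.univ.filter fun v : Fin 2 → F => dd u v = d₀) =
        Finset.univ.image (fun t : F => ![(u 0 * t - d₀) / u 1, t]) := by
      ext v
      simp only [Finset.mem_filter, Finset.mem_univ, true_and, Finset.mem_image]
      constructor
      · intro hv
        refine ⟨v 1, ?_⟩
        funext i; fin_cases i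
        · simp only [Fin.zero_eta, Matrix.cons_val_zero]
          field_simp
          unfold dd at hv
          linear_combination hv
        · simp
      · rintro ⟨t, rfl⟩
        unfold dd
        simp only [Matrix.cons_val_zero, Matrix.cons_val_one, Matrix.head_cons]
        field_simp
        ring
    rw [himg, Finset.card_image_of_injective _ (fun s t hst => by
      simpa using congrFun hst 1), Finset.card_univ]

lemma card_Sd (d₀ : F) (hd0 : d₀ ≠ 0) :
    (Finset.univ.filter fun p : (Fin 2 → F) × (Fin 2 → F) => dd p.1 p.2 = d₀).card
      = (Fintype.card F ^ 2 - 1) * Fintype.card F := by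
  classical
  rw [Finset.card_eq_sum_card_fiberwise (f := Prod.fst) (t := Finset.univ)
    (fun x _ => Finset.mem_univ _)]
  have key : ∀ u : Fin 2 → F,
      ((Finset.univ.filter fun p : (Fin 2 → F) × (Fin 2 → F) => dd p.1 p.2 = d₀).filter
        fun p => p.1 = u).card = if u = 0 then 0 else Fintype.card F := by
    intro u
    by_cases hu : u = 0
    · rw [if_pos hu]
      rw [Finset.card_eq_zero, Finset.filter_eq_empty_iff]
      rintro ⟨p1, p2⟩ hp
      simp only [Finset.mem_filter, Finset.mem_univ, true_and] at hp
      rintro rfl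
      subst hu
      apply hd0
      rw [← hp]
      simp [dd]
    · rw [if_neg hu]
      have : ((Finset.univ.filter fun p : (Fin 2 → F) × (Fin 2 → F) => dd p.1 p.2 = d₀).filter
          fun p => p.1 = u) = (Finset.univ.filter fun v : Fin 2 → F => dd u v = d₀).image
            (fun v => (u, v)) := by
        ext ⟨p1, p2⟩
        simp only [Finset.mem_filter, Finset.mem_univ, true_and, Finset.mem_image, Prod.mk.injEq]
        constructor
        · rintro ⟨hdd, rfl⟩
          exact ⟨p2, hdd, rfl, rfl⟩
        · rintro ⟨v, hv, rfl, rfl⟩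
          exact ⟨hv, rfl⟩
      rw [this, Finset.card_image_of_injective _ (fun s t hst => congrArg Prod.snd hst),
        card_fiber hu d₀]
  calc ∑ u : Fin 2 → F, ((Finset.univ.filter fun p : (Fin 2 → F) × (Fin 2 → F) => dd p.1 p.2 = d₀).filter
        fun p => p.1 = u).card
      = ∑ u : Fin 2 → F, if u = 0 then 0 else Fintype.card F := by
        exact Finset.sum_congr rfl fun u _ => key u
    _ = (Fintype.card F ^ 2 - 1) * Fintype.card F := by
        rw [Finset.sum_ite, Finset.sum_const_zero, Finset.sum_const, zero_add, smul_eq_mul,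
          Finset.filter_ne', Finset.card_erase_of_mem (Finset.mem_univ _), Finset.card_univ,
          Fintype.card_fun]
        simp

end Count

lemma scal_ne {u : Fin 2 → F} (hu : u ≠ 0) {a b : F} (hab : a ≠ b) : a • u ≠ b • u := by
  intro h
  apply hab
  rcases vec_cases hu with hi | hi
  · have := congrFun h 0
    simp only [Pi.smul_apply, smul_eq_mul] at this
    exact mul_right_cancel₀ hi this
  · have := congrFun h 1
    simp only [Pi.smul_apply, smul_eq_mul] at this
    exact mul_right_cancel₀ hi this

section Fiber
variable [Fintype F] [DecidableEq F] [DecidableEq (ProjLine F)]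

lemma fiber_eq {u v : Fin 2 → F} {d₀ c : F} (hd : dd u v = d₀) (hd0 : d₀ ≠ 0)
    (hc : c * c = -1) :
    (Finset.univ.filter fun p : (Fin 2 → F) × (Fin 2 → F) =>
        dd p.1 p.2 = d₀ ∧ EE p.1 p.2 = EE u v) =
      {(u, v), (-u, -v), (c • u, -(c • (u + v))), (-(c • u), c • (u + v))} := by
  have hduv : dd u v ≠ 0 := by rw [hd]; exact hd0
  have hu := dd_left_ne hduv
  have hv := dd_right_ne hduv
  have huv := dd_sum_ne hduv
  have hcne : c ≠ 0 := by
    intro h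
    have h1 : (-1 : F) = 0 := by rw [← hc, h, mul_zero]
    exact one_ne_zero (neg_eq_zero.mp h1)
  ext ⟨p1, p2⟩
  simp only [Finset.mem_filter, Finset.mem_univ, true_and, Finset.mem_insert,
    Finset.mem_singleton, Prod.mk.injEq]
  constructor
  · rintro ⟨hp, he⟩
    have hp0 : dd p1 p2 ≠ 0 := by rw [hp]; exact hd0
    obtain ⟨t, ht, hcase⟩ := main_rel hduv hp0 he.symm
    rcases hcase with ⟨h1, h2, h3⟩ | ⟨h1, h2, h3⟩
    · have h5 : d₀ = t ^ 2 * d₀ := by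
        conv_lhs => rw [← hp]
        rw [h3, hd]
      have h6 : (t * t - 1) * d₀ = 0 := by linear_combination -h5
      have h7 : t * t = 1 := by
        rcases mul_eq_zero.mp h6 with h' | h'
        · linear_combination h'
        · exact absurd h' hd0
      rcases mul_self_eq_one_iff.mp h7 with rfl | rfl
      · left; rw [one_smul] at h1 h2; exact ⟨h1, h2⟩
      · right; left
        rw [neg_one_smul] at h1 h2
        exact ⟨h1, h2⟩
    · have h5 : d₀ = -(t ^ 2 * d₀) := by
        conv_lhs => rw [← hp]
        rw [h3, hd]
      have h6 : (t * t - c * c) * d₀ = 0 := by linear_combination h5 - d₀ * hc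
      have h7 : t * t = c * c := by
        rcases mul_eq_zero.mp h6 with h' | h'
        · linear_combination h'
        · exact absurd h' hd0
      rcases mul_self_eq_mul_self_iff.mp h7 with rfl | rfl
      · right; right; left; exact ⟨h1, h2⟩
      · right; right; right
        rw [neg_smul] at h1 h2
        rw [neg_neg] at h2
        exact ⟨h1, h2⟩
  · have hne1 : (-1 : F) ≠ 0 := neg_ne_zero.mpr one_ne_zero
    rintro (⟨rfl, rfl⟩ | ⟨rfl, rfl⟩ | ⟨rfl, rfl⟩ | ⟨rfl, rfl⟩)
    · exact ⟨hd, rfl⟩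
    · constructor
      · rw [show -u = (-1 : F) • u from (neg_one_smul F u).symm,
          show -v = (-1 : F) • v from (neg_one_smul F v).symm, dd_smul_smul]
        rw [← hd]; ring
      · rw [show -u = (-1 : F) • u from (neg_one_smul F u).symm,
          show -v = (-1 : F) • v from (neg_one_smul F v).symm]
        exact EE_smul hduv hne1
    · constructor
      · rw [show -(c • (u + v)) = (-c) • (u + v) from (neg_smul c (u+v)).symm,
          dd_smul_smul, dd_add_right]
        linear_combination -(dd u v) * hc + hd
      · exact EE_swap hduv hcne
    · constructor
      · rw [show -(c • u) = (-c) • u from (neg_smul c u).symm, dd_smul_smul, dd_add_right]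
        linear_combination -(dd u v) * hc + hd
      · rw [show -(c • u) = (-c) • u from (neg_smul c u).symm,
          show c • (u + v) = -((-c) • (u + v)) from by rw [neg_smul, neg_neg]]
        exact EE_swap hduv (neg_ne_zero.mpr hcne)

end Fiber

section Fiber2
variable [Fintype F] [DecidableEq F] [DecidableEq (ProjLine F)]

lemma fiber_card {u v : Fin 2 → F} {d₀ c : F} (hd : dd u v = d₀) (hd0 : d₀ ≠ 0)
    (hc : c * c = -1) (h2 : (2 : F) ≠ 0) :
    (Finset.univ.filter fun p : (Fin 2 → F) × (Fin 2 → F) =>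
        dd p.1 p.2 = d₀ ∧ EE p.1 p.2 = EE u v).card = 4 := by
  have hduv : dd u v ≠ 0 := by rw [hd]; exact hd0
  have hu := dd_left_ne hduv
  have hcne : c ≠ 0 := by
    intro h
    have h1 : (-1 : F) = 0 := by rw [← hc, h, mul_zero]
    exact one_ne_zero (neg_eq_zero.mp h1)
  have key : ∀ a b : F, a ≠ b → a • u ≠ b • u := fun a b hab => scal_ne hu hab
  have s1 : (1 : F) ≠ -1 := by intro h; apply h2; linear_combination h
  have s2 : (1 : F) ≠ c := by
    intro h; rw [← h] at hc; apply h2; linear_combination hc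
  have s3 : (1 : F) ≠ -c := by
    intro h
    have hc1 : c = -1 := by linear_combination h
    rw [hc1] at hc; apply h2; linear_combination hc
  have s4 : (-1 : F) ≠ c := fun h => s3 (by linear_combination -h)
  have s5 : (-1 : F) ≠ -c := fun h => s2 (by linear_combination -h)
  have s6 : c ≠ -c := by
    intro h
    have h0 : c * 2 = 0 := by linear_combination h
    rcases mul_eq_zero.mp h0 with h' | h'
    · exact hcne h'
    · exact h2 h'
  have k1 : u ≠ -u := by
    intro h; exact key 1 (-1) s1 (by simpa [one_smul, neg_one_smul] using h)
  have k2 : u ≠ c • u := by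
    intro h; exact key 1 c s2 (by simpa [one_smul] using h)
  have k3 : u ≠ -(c • u) := by
    intro h; exact key 1 (-c) s3 (by simpa [one_smul, neg_smul] using h)
  have k4 : -u ≠ c • u := by
    intro h; exact key (-1) c s4 (by simpa [neg_one_smul] using h)
  have k5 : -u ≠ -(c • u) := by
    intro h; exact key (-1) (-c) s5 (by simpa [neg_one_smul, neg_smul] using h)
  have k6 : c • u ≠ -(c • u) := by
    intro h; exact key c (-c) s6 (by simpa [neg_smul] using h)
  rw [fiber_eq hd hd0 hc]
  rw [Finset.card_insert_of_notMem (by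
      simp only [Finset.mem_insert, Finset.mem_singleton, Prod.mk.injEq, not_or]
      exact ⟨fun h => absurd h.1 k1, fun h => absurd h.1 k2, fun h => absurd h.1 k3⟩),
    Finset.card_insert_of_notMem (by
      simp only [Finset.mem_insert, Finset.mem_singleton, Prod.mk.injEq, not_or]
      exact ⟨fun h => absurd h.1 k4, fun h => absurd h.1 k5⟩),
    Finset.card_insert_of_notMem (by
      simp only [Finset.mem_singleton, Prod.mk.injEq, not_or]
      exact fun h => absurd h.1 k6),
    Finset.card_singleton]

end Fiber2

section Count2
variable [Fintype F] [DecidableEq F] [DecidableEq (ProjLine F)]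

lemma image_card_mul_four {d₀ c : F} (hd0 : d₀ ≠ 0) (hc : c * c = -1) (h2 : (2 : F) ≠ 0) :
    ((Finset.univ.filter fun p : (Fin 2 → F) × (Fin 2 → F) => dd p.1 p.2 = d₀).image
      (fun p => EE p.1 p.2)).card * 4 = (Fintype.card F ^ 2 - 1) * Fintype.card F := by
  have hsum : (Finset.univ.filter fun p : (Fin 2 → F) × (Fin 2 → F) => dd p.1 p.2 = d₀).card
      = ((Finset.univ.filter fun p : (Fin 2 → F) × (Fin 2 → F) => dd p.1 p.2 = d₀).image
          (fun p => EE p.1 p.2)).card * 4 := by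
    rw [Finset.card_eq_sum_card_image (fun p : (Fin 2 → F) × (Fin 2 → F) => EE p.1 p.2)]
    refine Finset.sum_const_nat fun e he => ?_
    obtain ⟨p, hp, rfl⟩ := Finset.mem_image.mp he
    rw [Finset.mem_filter] at hp
    rw [Finset.filter_filter]
    exact fiber_card hp.2 hd0 hc h2
  rw [← card_Sd d₀ hd0, hsum]

lemma sq_ratio {a b : F} (ha : a ≠ 0) (hb : b ≠ 0) (h : IsSquare a ↔ IsSquare b) :
    ∃ s : F, s ≠ 0 ∧ a = s ^ 2 * b := by
  by_cases hsa : IsSquare a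
  · obtain ⟨x, hx⟩ := hsa
    obtain ⟨y, hy⟩ := h.mp ⟨x, hx⟩
    have hx0 : x ≠ 0 := by rintro rfl; rw [mul_zero] at hx; exact ha hx
    have hy0 : y ≠ 0 := by rintro rfl; rw [mul_zero] at hy; exact hb hy
    refine ⟨x / y, div_ne_zero hx0 hy0, ?_⟩
    rw [hx, hy]
    field_simp
  · have hsb : ¬IsSquare b := fun hb' => hsa (h.mpr hb')
    have hqa : quadraticChar F a = -1 := quadraticChar_neg_one_iff_not_isSquare.mpr hsa
    have hqb : quadraticChar F b = -1 := quadraticChar_neg_one_iff_not_isSquare.mpr hsb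
    have hbinv : quadraticChar F b⁻¹ = -1 := by
      have h1 : quadraticChar F b⁻¹ * quadraticChar F b = 1 := by
        rw [← _root_.map_mul, inv_mul_cancel₀ hb, _root_.map_one]
      rw [hqb] at h1
      omega
    have hq : quadraticChar F (a * b⁻¹) = 1 := by
      rw [_root_.map_mul, hqa, hbinv]; norm_num
    have hsq : IsSquare (a * b⁻¹) :=
      (quadraticChar_one_iff_isSquare (mul_ne_zero ha (inv_ne_zero hb))).mp hq
    obtain ⟨s, hs⟩ := hsq
    have hs0 : s ≠ 0 := by
      rintro rfl
      rw [mul_zero] at hs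
      exact mul_ne_zero ha (inv_ne_zero hb) hs
    refine ⟨s, hs0, ?_⟩
    field_simp at hs
    linear_combination hs

end Count2

lemma pt_rep (x : ProjLine F) : pt x.rep = x := by
  rw [pt_eq_mk (Projectivization.rep_nonzero x)]
  exact Projectivization.mk_rep x

section Edges
variable [DecidableEq (ProjLine F)]

lemma pt_ne_of_ne {x y : ProjLine F} (h : x ≠ y) : dd x.rep y.rep ≠ 0 := by
  intro h0
  exact h (by rw [← pt_rep x, ← pt_rep y,
    pt_eq_pt_iff (Projectivization.rep_nonzero x) (Projectivization.rep_nonzero y)]; exact h0)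

lemma edge_to_EE {A B : Finset (ProjLine F)} (hA : A.card = 2) (hB : B.card = 2)
    (hI : (A ∩ B).card = 1) : ∃ u v, dd u v ≠ 0 ∧ s(A, B) = EE u v := by
  obtain ⟨x, hx⟩ := Finset.card_eq_one.mp hI
  have hxA : x ∈ A := (Finset.mem_inter.mp (hx ▸ Finset.mem_singleton_self x)).1
  have hxB : x ∈ B := (Finset.mem_inter.mp (hx ▸ Finset.mem_singleton_self x)).2
  have hAy : ∃ y, y ≠ x ∧ A = {x, y} := by
    obtain ⟨a1, a2, hne, rfl⟩ := Finset.card_eq_two.mp hA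
    rcases Finset.mem_insert.mp hxA with rfl | h2
    · exact ⟨a2, fun h => hne h.symm, rfl⟩
    · rcases Finset.mem_singleton.mp h2 with rfl
      exact ⟨a1, fun h => hne h, by rw [Finset.pair_comm]⟩
  have hBz : ∃ z, z ≠ x ∧ B = {x, z} := by
    obtain ⟨b1, b2, hne, rfl⟩ := Finset.card_eq_two.mp hB
    rcases Finset.mem_insert.mp hxB with rfl | h2
    · exact ⟨b2, fun h => hne h.symm, rfl⟩
    · rcases Finset.mem_singleton.mp h2 with rfl
      exact ⟨b1, fun h => hne h, by rw [Finset.pair_comm]⟩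
  obtain ⟨y, hyx, rfl⟩ := hAy
  obtain ⟨z, hzx, rfl⟩ := hBz
  have hyz : y ≠ z := by
    rintro rfl
    have : y ∈ ({x, y} ∩ ({x, y} : Finset (ProjLine F))) := by simp
    rw [show ({x,y} ∩ ({x,y} : Finset (ProjLine F))) = {x,y} from Finset.inter_self _] at this
    -- need y ∈ A ∩ B = {x}
    have hyI : y ∈ ({x, y} : Finset (ProjLine F)) ∩ {x, y} := by simp
    rw [hx] at hyI
    exact hyx (Finset.mem_singleton.mp hyI)
  set a := x.rep with ha
  set b := y.rep with hb
  set cz := z.rep with hcz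
  have hna := Projectivization.rep_nonzero x
  have hnb := Projectivization.rep_nonzero y
  have hnc := Projectivization.rep_nonzero z
  have hab : dd a b ≠ 0 := pt_ne_of_ne (fun h => hyx h.symm)
  have hac : dd a cz ≠ 0 := pt_ne_of_ne (fun h => hzx h.symm)
  have hcb : dd cz b ≠ 0 := pt_ne_of_ne (fun h => hyz h.symm)
  refine ⟨dd cz b • a, dd a cz • b, ?_, ?_⟩
  · rw [dd_smul_smul]
    exact mul_ne_zero (mul_ne_zero hcb hac) hab
  · have hsum : dd cz b • a + dd a cz • b = dd a b • cz := by
      funext i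
      fin_cases i <;>
        (simp only [Pi.add_apply, Pi.smul_apply, smul_eq_mul, Fin.zero_eta, Fin.mk_one,
           Fin.isValue]; unfold dd; ring)
    unfold EE
    rw [hsum, pt_smul hna hcb, pt_smul hnb hac, pt_smul hnc hab, pt_rep, pt_rep, pt_rep]

lemma EE_to_edge {u v : Fin 2 → F} (hd : dd u v ≠ 0) :
    ∃ A B : Finset (ProjLine F), EE u v = s(A, B) ∧ A.card = 2 ∧ B.card = 2 ∧
      (A ∩ B).card = 1 := by
  have hu := dd_left_ne hd
  have hv := dd_right_ne hd
  have huv := dd_sum_ne hd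
  have ne_uv : pt u ≠ pt v := fun e => hd ((pt_eq_pt_iff hu hv).1 e)
  have ne_uw : pt u ≠ pt (u + v) := fun e => by
    rw [pt_eq_pt_iff hu huv, dd_add_right] at e; exact hd e
  have ne_vw : pt v ≠ pt (u + v) := fun e => by
    rw [pt_eq_pt_iff hv huv, dd_right_sum] at e
    exact hd (neg_eq_zero.mp e)
  refine ⟨{pt u, pt v}, {pt u, pt (u + v)}, rfl, Finset.card_pair ne_uv,
    Finset.card_pair ne_uw, ?_⟩
  have hint : ({pt u, pt v} ∩ {pt u, pt (u + v)} : Finset (ProjLine F)) = {pt u} := by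
    ext w
    simp only [Finset.mem_inter, Finset.mem_insert, Finset.mem_singleton]
    constructor
    · rintro ⟨h1 | h1, h2 | h2⟩
      · exact h1
      · exact h1
      · exact h2
      · exact absurd (h1.symm.trans h2) ne_vw
    · rintro rfl
      exact ⟨Or.inl rfl, Or.inl rfl⟩
  rw [hint, Finset.card_singleton]

end Edges

end PSLJ

open PSLJ in
/-- Let `q ≡ 1 (mod 4)` be a prime power. Then `PSL(2,q)`, acting on unordered pairs
of points of the projective line `PG(1,q)`, has exactly two orbits on the edges of
the Johnson graph `J(q+1,2)` (pairs of `2`-subsets meeting in one point), and these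
two orbits have equal size `q(q²−1)/4`.  (The orbits of `PSL(2,q)` on the projective
line coincide with the orbits of `SL(2,q)`, since scalars act trivially.) -/
theorem psl2_two_orbits_on_johnson_edges (F : Type) [Field F] [Fintype F]
    (q : ℕ) (hq : Fintype.card F = q) (hq4 : q % 4 = 1) :
    ∀ _ : DecidableEq (ProjLine F), -- fix an instance
    ∃ O₁ O₂ : Set (Sym2 (Finset (ProjLine F))),
      Disjoint O₁ O₂ ∧ O₁.Nonempty ∧ O₂.Nonempty ∧
      O₁ ∪ O₂ = {e : Sym2 (Finset (ProjLine F)) | ∃ A B : Finset (ProjLine F),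
        e = s(A, B) ∧ A.card = 2 ∧ B.card = 2 ∧ (A ∩ B).card = 1} ∧
      (∀ e ∈ O₁, ∀ e' : Sym2 (Finset (ProjLine F)),
        (e' ∈ O₁ ↔ ∃ g : SpecialLinearGroup (Fin 2) F,
          e' = e.map (fun A => A.image (sl2Map g)))) ∧
      (∀ e ∈ O₂, ∀ e' : Sym2 (Finset (ProjLine F)),
        (e' ∈ O₂ ↔ ∃ g : SpecialLinearGroup (Fin 2) F,
          e' = e.map (fun A => A.image (sl2Map g)))) ∧
      O₁.ncard = q * (q ^ 2 - 1) / 4 ∧ O₂.ncard = q * (q ^ 2 - 1) / 4 := by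
  intro instDec
  letI : DecidableEq F := Classical.decEq F
  have hchar2 : ringChar F ≠ 2 := by
    intro h
    have h2 := FiniteField.even_card_iff_char_two.mp h
    omega
  have h2F : (2 : F) ≠ 0 := Ring.two_ne_zero hchar2
  have hm1 : IsSquare (-1 : F) := FiniteField.isSquare_neg_one_iff.mpr (by rw [hq]; omega)
  obtain ⟨c, hc'⟩ := hm1
  have hc : c * c = -1 := hc'.symm
  have hcne : c ≠ 0 := by
    intro h
    have h1 : (-1 : F) = 0 := by rw [← hc, h, mul_zero]
    exact one_ne_zero (neg_eq_zero.mp h1)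
  obtain ⟨ε, hε⟩ := FiniteField.exists_nonsquare (F := F) hchar2
  have hε0 : ε ≠ 0 := fun h => hε (h ▸ ⟨0, by simp⟩)
  -- square class transfer
  have class_eq : ∀ {u v u' v' : Fin 2 → F}, dd u v ≠ 0 → dd u' v' ≠ 0 → EE u v = EE u' v' →
      (IsSquare (dd u v) ↔ IsSquare (dd u' v')) := by
    intro u v u' v' h1 h2 he
    obtain ⟨t, ht, hcase⟩ := main_rel h1 h2 he
    rcases hcase with ⟨_, _, h3⟩ | ⟨_, _, h3⟩
    · rw [h3, isSquare_sq_mul ht]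
    · have h4 : dd u' v' = (c * t) ^ 2 * dd u v := by
        rw [h3]; linear_combination (-(t ^ 2 * dd u v)) * hc
      rw [h4, isSquare_sq_mul (mul_ne_zero hcne ht)]
  refine ⟨{e | ∃ u v : Fin 2 → F, dd u v ≠ 0 ∧ IsSquare (dd u v) ∧ e = EE u v},
          {e | ∃ u v : Fin 2 → F, dd u v ≠ 0 ∧ ¬IsSquare (dd u v) ∧ e = EE u v},
          ?_, ?_, ?_, ?_, ?_, ?_, ?_, ?_⟩
  · -- Disjoint
    rw [Set.disjoint_left]
    rintro e ⟨u, v, hd, hsq, rfl⟩ ⟨u', v', hd', hsq', he⟩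
    exact hsq' ((class_eq hd hd' he).mp hsq)
  · -- O₁ nonempty
    have hdd1 : dd ![(1 : F), 0] ![0, 1] = 1 := by unfold dd; simp
    exact ⟨EE ![(1 : F), 0] ![0, 1], ![(1 : F), 0], ![0, 1],
      by rw [hdd1]; exact one_ne_zero, by rw [hdd1]; exact IsSquare.one, rfl⟩
  · -- O₂ nonempty
    have hddε : dd ![(1 : F), 0] (ε • ![0, 1]) = ε := by unfold dd; simp
    exact ⟨EE ![(1 : F), 0] (ε • ![0, 1]), ![(1 : F), 0], ε • ![0, 1],
      by rw [hddε]; exact hε0, by rw [hddε]; exact hε, rfl⟩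
  · -- union
    ext e
    simp only [Set.mem_union, Set.mem_setOf_eq]
    constructor
    · rintro (⟨u, v, hd, _, rfl⟩ | ⟨u, v, hd, _, rfl⟩) <;> exact EE_to_edge hd
    · rintro ⟨A, B, rfl, hA, hB, hI⟩
      obtain ⟨u, v, hd, he⟩ := edge_to_EE hA hB hI
      by_cases hsq : IsSquare (dd u v)
      · exact Or.inl ⟨u, v, hd, hsq, he⟩
      · exact Or.inr ⟨u, v, hd, hsq, he⟩
  · -- orbit condition for O₁
    rintro e ⟨u, v, hd, hsq, rfl⟩ e'
    constructor
    · rintro ⟨u', v', hd', hsq', rfl⟩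
      obtain ⟨s, hs, hrat⟩ := sq_ratio hd' hd (iff_of_true hsq' hsq)
      have h1 : dd (s⁻¹ • u') (s⁻¹ • v') = dd u v := by
        rw [dd_smul_smul, hrat]; field_simp
      obtain ⟨g, hg1, hg2⟩ := exists_sl2 hd h1
      exact ⟨g, by rw [map_EE g hd, hg1, hg2, EE_smul hd' (inv_ne_zero hs)]⟩
    · rintro ⟨g, rfl⟩
      rw [map_EE g hd]
      exact ⟨_, _, by rw [dd_mulVec_sl2]; exact hd, by rw [dd_mulVec_sl2]; exact hsq, rfl⟩
  · -- orbit condition for O₂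
    rintro e ⟨u, v, hd, hsq, rfl⟩ e'
    constructor
    · rintro ⟨u', v', hd', hsq', rfl⟩
      obtain ⟨s, hs, hrat⟩ := sq_ratio hd' hd (iff_of_false hsq' hsq)
      have h1 : dd (s⁻¹ • u') (s⁻¹ • v') = dd u v := by
        rw [dd_smul_smul, hrat]; field_simp
      obtain ⟨g, hg1, hg2⟩ := exists_sl2 hd h1
      exact ⟨g, by rw [map_EE g hd, hg1, hg2, EE_smul hd' (inv_ne_zero hs)]⟩
    · rintro ⟨g, rfl⟩
      rw [map_EE g hd]
      exact ⟨_, _, by rw [dd_mulVec_sl2]; exact hd, by rw [dd_mulVec_sl2]; exact hsq, rfl⟩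
  · -- ncard O₁
    have hT1 : {e | ∃ u v : Fin 2 → F, dd u v ≠ 0 ∧ IsSquare (dd u v) ∧ e = EE u v} =
        ↑((Finset.univ.filter fun p : (Fin 2 → F) × (Fin 2 → F) => dd p.1 p.2 = 1).image
          (fun p => EE p.1 p.2)) := by
      ext e
      simp only [Finset.coe_image, Set.mem_image, Finset.mem_coe, Finset.mem_filter,
        Finset.mem_univ, true_and, Set.mem_setOf_eq]
      constructor
      · rintro ⟨u, v, hd, hsq, rfl⟩
        obtain ⟨s, hs, hrat⟩ := sq_ratio hd one_ne_zero (iff_of_true hsq IsSquare.one)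
        rw [mul_one] at hrat
        refine ⟨(s⁻¹ • u, s⁻¹ • v), ?_, EE_smul hd (inv_ne_zero hs)⟩
        show dd (s⁻¹ • u) (s⁻¹ • v) = 1
        rw [dd_smul_smul, hrat]
        field_simp
      · rintro ⟨⟨u, v⟩, hp, rfl⟩
        exact ⟨u, v, by rw [hp]; exact one_ne_zero, by rw [hp]; exact IsSquare.one, rfl⟩
    rw [hT1, Set.ncard_coe_finset]
    have h4 := image_card_mul_four (F := F) (d₀ := 1) one_ne_zero hc h2F
    rw [hq] at h4
    exact (Nat.div_eq_of_eq_mul_left (by norm_num) (by rw [mul_comm q (q ^ 2 - 1), ← h4])).symm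
  · -- ncard O₂
    have hT2 : {e | ∃ u v : Fin 2 → F, dd u v ≠ 0 ∧ ¬IsSquare (dd u v) ∧ e = EE u v} =
        ↑((Finset.univ.filter fun p : (Fin 2 → F) × (Fin 2 → F) => dd p.1 p.2 = ε).image
          (fun p => EE p.1 p.2)) := by
      ext e
      simp only [Finset.coe_image, Set.mem_image, Finset.mem_coe, Finset.mem_filter,
        Finset.mem_univ, true_and, Set.mem_setOf_eq]
      constructor
      · rintro ⟨u, v, hd, hsq, rfl⟩
        obtain ⟨s, hs, hrat⟩ := sq_ratio hd hε0 (iff_of_false hsq hε)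
        refine ⟨(s⁻¹ • u, s⁻¹ • v), ?_, EE_smul hd (inv_ne_zero hs)⟩
        show dd (s⁻¹ • u) (s⁻¹ • v) = ε
        rw [dd_smul_smul, hrat]
        field_simp
      · rintro ⟨⟨u, v⟩, hp, rfl⟩
        exact ⟨u, v, by rw [hp]; exact hε0, by rw [hp]; exact hε, rfl⟩
    rw [hT2, Set.ncard_coe_finset]
    have h4 := image_card_mul_four (F := F) (d₀ := ε) hε0 hc h2F
    rw [hq] at h4
    exact (Nat.div_eq_of_eq_mul_left (by norm_num) (by rw [mul_comm q (q ^ 2 - 1), ← h4])).symm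
end

section
/- Let q = q₀^r with r prime, and let H = PGL(2,q₀) ≤ PGL(2,q) acting on the projective line GF(q) ∪ {∞}. If r is odd then H acts semiregularly on GF(q) \ GF(q₀) (all point stabilisers in H of points of GF(q)\GF(q₀) are trivial), while if r = 2 then H acts transitively on GF(q) \ GF(q₀). -/
/-- Let `q = q₀^r` with `r` prime, and let `H = PGL(2,q₀) ≤ PGL(2,q)` (fractional
linear maps `z ↦ (az+b)/(cz+d)` with `a,b,c,d ∈ GF(q₀)`, `ad−bc ≠ 0`) act on the
projective line `GF(q) ∪ {∞}`. If `r` is odd then `H` acts semiregularly on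
`GF(q) \ GF(q₀)` (only the identity fractional linear map over `GF(q₀)` fixes a point
outside `GF(q₀)`), while if `r = 2` then `H` acts transitively on `GF(q) \ GF(q₀)`. -/
theorem subfield_subgroup_orbits (F : Type*) [Field F] [Fintype F]
    (F₀ : Subfield F) (q₀ r : ℕ) (hr : r.Prime)
    (hq₀ : Nat.card F₀ = q₀) (hcard : Fintype.card F = q₀ ^ r) :
    (Odd r →
      ∀ a b c d : F, a ∈ F₀ → b ∈ F₀ → c ∈ F₀ → d ∈ F₀ → a * d - b * c ≠ 0 →
        ∀ z : F, z ∉ F₀ → a * z + b = (c * z + d) * z → (b = 0 ∧ c = 0 ∧ a = d)) ∧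
    (r = 2 →
      ∀ z w : F, z ∉ F₀ → w ∉ F₀ →
        ∃ a b c d : F, a ∈ F₀ ∧ b ∈ F₀ ∧ c ∈ F₀ ∧ d ∈ F₀ ∧ a * d - b * c ≠ 0 ∧
          c * z + d ≠ 0 ∧ a * z + b = w * (c * z + d)) := by
  haveI : Fintype F₀ := Fintype.ofFinite _
  have hq2 : 2 ≤ q₀ := by
    rw [← hq₀, Nat.card_eq_fintype_card]
    exact Fintype.one_lt_card
  have hfr : Module.finrank F₀ F = r := by
    have h1 : Fintype.card F = Fintype.card F₀ ^ Module.finrank F₀ F :=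
      Module.card_eq_pow_finrank
    rw [hcard, ← Nat.card_eq_fintype_card, hq₀] at h1
    exact (Nat.pow_right_injective hq2 h1.symm)
  constructor
  · intro hodd a b c d ha hb hc hd _ z hz heq
    have hint : IsIntegral F₀ z := IsIntegral.of_finite F₀ z
    set p : Polynomial F₀ :=
      Polynomial.C ⟨c, hc⟩ * Polynomial.X ^ 2 +
        Polynomial.C ⟨d - a, sub_mem hd ha⟩ * Polynomial.X - Polynomial.C ⟨b, hb⟩ with hp
    have heval : Polynomial.aeval z p = 0 := by
      simp only [hp, map_sub, map_add, map_mul, map_pow, Polynomial.aeval_C,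
        Polynomial.aeval_X]
      show (c : F) * z ^ 2 + (d - a) * z - b = 0
      linear_combination -heq
    by_cases hp0 : p = 0
    · have hcoeff : ∀ n, p.coeff n = 0 := fun n => by rw [hp0]; simp
      have h0 := hcoeff 0
      have h1 := hcoeff 1
      have h2 := hcoeff 2
      simp only [hp, Polynomial.coeff_sub, Polynomial.coeff_add, Polynomial.coeff_C_mul,
        Polynomial.coeff_X_pow, Polynomial.coeff_X, Polynomial.coeff_C] at h0 h1 h2
      norm_num at h0 h1 h2
      refine ⟨?_, ?_, ?_⟩
      · simpa [Subtype.ext_iff] using h0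
      · simpa [Subtype.ext_iff] using h2
      · have : d - a = 0 := by simpa [Subtype.ext_iff] using h1
        exact (sub_eq_zero.mp this).symm
    · exfalso
      have hdvd := minpoly.dvd F₀ z heval
      have hdegp : p.natDegree ≤ 2 := by
        rw [hp]; compute_degree
      have hdeg : (minpoly F₀ z).natDegree ≤ 2 :=
        le_trans (Polynomial.natDegree_le_of_dvd hdvd hp0) hdegp
      have hdvdr := minpoly.degree_dvd (K := F₀) hint
      rw [hfr] at hdvdr
      have hne1 : (minpoly F₀ z).natDegree ≠ 1 := by
        intro h1
        obtain ⟨y, hy⟩ := (minpoly.natDegree_eq_one_iff).mp h1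
        exact hz (hy ▸ y.2)
      have heqr : (minpoly F₀ z).natDegree = r :=
        ((Nat.Prime.eq_one_or_self_of_dvd hr _ hdvdr).resolve_left hne1)
      have hr2 : r ≠ 2 := by
        rintro rfl
        revert hodd; decide
      have := hr.two_le
      omega
  · intro hr2 z w hz hw
    subst hr2
    have hli : LinearIndependent F₀ ![(1 : F), z] := by
      rw [LinearIndependent.pair_iff' one_ne_zero]
      intro α hα
      apply hz
      rw [← hα, Algebra.smul_def, mul_one]
      exact α.2
    have hspan : Submodule.span F₀ (Set.range ![(1 : F), z]) = ⊤ :=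
      hli.span_eq_top_of_card_eq_finrank (by simp [hfr])
    have hrange : Set.range ![(1 : F), z] = {1, z} := by
      ext x
      simp [Fin.exists_fin_two]
      tauto
    have hw' : w ∈ Submodule.span F₀ ({(1 : F), z} : Set F) := by
      rw [← hrange, hspan]; trivial
    obtain ⟨β, α, hαβ⟩ := Submodule.mem_span_pair.mp hw'
    have hαβ' : (β : F) * 1 + (α : F) * z = w := by
      simp only [Algebra.smul_def] at hαβ; exact hαβ
    have hα0 : (α : F) ≠ 0 := by
      intro h0
      apply hw
      rw [← hαβ', h0]
      simp
    refine ⟨(α : F), (β : F), 0, 1, α.2, β.2, F₀.zero_mem, F₀.one_mem, ?_, ?_, ?_⟩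
    · simpa using hα0
    · simp
    · simp only [zero_mul, zero_add, mul_one]
      linear_combination hαβ'
end
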